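/- Let ρ : 𝕋¹ → ℂ be a C^∞ function and let (α, β) satisfy a type-1 Diophantine condition, i.e., there exist C > 0 and τ ≥ 0 with |e^{2πi(nα−β)} − 1| ≥ C / max(|n|,1)^{1+τ} for every integer n. Then the cylindrical vortex F(x,z) = (x + α, e^{2πiβ} z + ρ(x)) on 𝕋¹ × ℂ is reducible: there exists a continuous (indeed C^∞) function φ : 𝕋¹ → ℂ satisfying φ(x + α) = e^{2πiβ} φ(x) + ρ(x) for all x ∈ 𝕋¹. -/

import Mathlib

open Real

noncomputable section AuxReducible

local instance auxFactOneZero : Fact ((0:ℝ) < 1) := ⟨one_pos⟩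

lemma aux_hasDerivAt_cexp (a : ℂ) (t : ℝ) :
    HasDerivAt (fun t : ℝ => Complex.exp (a * t)) (a * Complex.exp (a * t)) t := by
  have h : HasDerivAt (fun z : ℂ => Complex.exp (a * z)) (a * Complex.exp (a * (t:ℂ))) (t:ℂ) := by
    have h0 : HasDerivAt (fun z : ℂ => a * z) a (t:ℂ) := by
      simpa using (hasDerivAt_id (t:ℂ)).const_mul a
    exact ((Complex.hasDerivAt_exp (a * (t:ℂ))).comp (t:ℂ) h0).congr_deriv (mul_comm _ _)
  exact h.comp_ofReal

lemma aux_iteratedDeriv_cexp (c a : ℂ) (k : ℕ) :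
    iteratedDeriv k (fun t : ℝ => c * Complex.exp (a * t)) =
      fun t : ℝ => c * a ^ k * Complex.exp (a * t) := by
  induction k with
  | zero => simp
  | succ k ih =>
    rw [iteratedDeriv_succ, ih]
    funext t
    have h := HasDerivAt.const_mul (c * a ^ k) (aux_hasDerivAt_cexp a t)
    rw [h.deriv]
    ring

lemma aux_contDiff_cexp (c a : ℂ) :
    ContDiff ℝ (⊤ : ℕ∞) (fun t : ℝ => c * Complex.exp (a * t)) := by
  exact contDiff_const.mul ((Complex.contDiff_exp (𝕜 := ℝ)).comp
    (contDiff_const.mul Complex.ofRealCLM.contDiff))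

lemma aux_norm_exp_I_mul (b : ℝ) (x : ℝ) :
    ‖Complex.exp ((b : ℂ) * Complex.I * (x : ℂ))‖ = 1 := by
  rw [show (b : ℂ) * Complex.I * (x : ℂ) = ((b * x : ℝ) : ℂ) * Complex.I by push_cast; ring,
    Complex.norm_exp_ofReal_mul_I]

lemma aux_norm_exp_of_re_zero (w : ℂ) (hw : w.re = 0) : ‖Complex.exp w‖ = 1 := by
  rw [Complex.norm_exp, hw, Real.exp_zero]

lemma aux_norm_iteratedFDeriv_cexp (c : ℂ) (b : ℝ) (k : ℕ) (x : ℝ) :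
    ‖iteratedFDeriv ℝ k (fun t : ℝ => c * Complex.exp ((b : ℂ) * Complex.I * t)) x‖
      = ‖c‖ * |b| ^ k := by
  rw [norm_iteratedFDeriv_eq_norm_iteratedDeriv, aux_iteratedDeriv_cexp]
  rw [norm_mul, norm_mul, aux_norm_exp_I_mul, mul_one, norm_pow, norm_mul,
    Complex.norm_real, Complex.norm_I, mul_one, Real.norm_eq_abs]

lemma aux_fourierCoeff_eq_fourierCoeffOn (f : AddCircle (1:ℝ) → ℂ) (n : ℤ) :
    fourierCoeff f n = fourierCoeffOn zero_lt_one (fun t : ℝ => f t) n := by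
  rw [fourierCoeff_eq_intervalIntegral f n 0, fourierCoeffOn_eq_integral]
  simp [fourier_coe_apply]

lemma aux_fourierCoeffOn_step (f : ℝ → ℂ) (hf : ContDiff ℝ (⊤ : ℕ∞) f) (hper : f 1 = f 0)
    {n : ℤ} (hn : n ≠ 0) :
    fourierCoeffOn zero_lt_one f n
      = 1 / (2 * π * Complex.I * n) * fourierCoeffOn zero_lt_one (deriv f) n := by
  have h1 : (1 : WithTop ℕ∞) ≤ ((⊤ : ℕ∞) : WithTop ℕ∞) := by exact_mod_cast le_top
  rw [fourierCoeffOn_of_hasDerivAt zero_lt_one hn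
      (fun x _ => ((hf.differentiable (by simp)) x).hasDerivAt)
      ((hf.continuous_deriv h1).intervalIntegrable _ _), hper]
  have hπ : (π : ℂ) ≠ 0 := Complex.ofReal_ne_zero.mpr Real.pi_ne_zero
  have hnne : (n : ℂ) ≠ 0 := Int.cast_ne_zero.mpr hn
  field_simp
  simp

lemma aux_norm_fourierCoeffOn_le (f : ℝ → ℂ) (M : ℝ)
    (hM : ∀ x ∈ Set.Icc (0:ℝ) 1, ‖f x‖ ≤ M) (n : ℤ) :
    ‖fourierCoeffOn zero_lt_one f n‖ ≤ M := by
  rw [fourierCoeffOn_eq_integral]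
  have h : ∀ x ∈ Set.uIoc (0:ℝ) (1:ℝ),
      ‖fourier (-n) (x : AddCircle ((1:ℝ) - 0)) • f x‖ ≤ M := by
    intro x hx
    rw [norm_smul]
    have h1 : ‖(fourier (-n) (x : AddCircle ((1:ℝ) - 0)) : ℂ)‖ = 1 := by
      rw [fourier_coe_apply]
      apply aux_norm_exp_of_re_zero
      rw [show 2 * (π:ℂ) * Complex.I * ((-n : ℤ) : ℂ) * (x:ℂ) / (((1:ℝ) - 0 : ℝ) : ℂ)
          = ((2 * π * ((-n : ℤ):ℝ) * x : ℝ) : ℂ) * Complex.I by push_cast; ring]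
      simp
    rw [h1, one_mul]
    rw [Set.uIoc_of_le zero_le_one] at hx
    exact hM x ⟨le_of_lt hx.1, hx.2⟩
  have hInt := intervalIntegral.norm_integral_le_of_norm_le_const h
  rw [norm_smul]
  have h2 : ‖(1 / ((1:ℝ) - 0) : ℝ)‖ = 1 := by norm_num
  rw [h2, one_mul]
  calc ‖∫ x in (0:ℝ)..1, fourier (-n) (x : AddCircle ((1:ℝ) - 0)) • f x‖
      ≤ M * |(1:ℝ) - 0| := hInt
    _ = M := by norm_num

lemma aux_periodic_deriv (f : ℝ → ℂ) (h : Function.Periodic f 1) :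
    Function.Periodic (deriv f) 1 := by
  intro x
  have h1 : (fun y : ℝ => f (y + 1)) = f := funext h
  calc deriv f (x + 1) = deriv (fun y : ℝ => f (y + 1)) x := (deriv_comp_add_const f 1 x).symm
    _ = deriv f x := by rw [h1]

end AuxReducible

/-- If `ρ : 𝕋¹ → ℂ` is `C^∞` (i.e. its 1-periodic lift to `ℝ` is smooth) and the pair
`(α, β)` satisfies a type-1 Diophantine condition, then the cylindrical vortex
`F(x,z) = (x + α, e^{2πiβ} z + ρ(x))` is reducible: the cohomological equation
`φ(x + α) = e^{2πiβ} φ(x) + ρ(x)` has a continuous (indeed `C^∞`) solution `φ`. -/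
theorem reducible_of_diophantine
    (α β : ℝ)
    (ρ : AddCircle (1 : ℝ) → ℂ)
    (hρ : ContDiff ℝ (⊤ : ℕ∞) fun t : ℝ => ρ (t : AddCircle (1 : ℝ)))
    (C τ : ℝ) (hC : 0 < C) (hτ : 0 ≤ τ)
    (hdio : ∀ n : ℤ,
      C / ((max |n| 1 : ℤ) : ℝ) ^ ((1 : ℝ) + τ)
        ≤ ‖Complex.exp (2 * π * Complex.I * ((n : ℝ) * α - β)) - 1‖) :
    ∃ φ : AddCircle (1 : ℝ) → ℂ, Continuous φ ∧
      (ContDiff ℝ (⊤ : ℕ∞) fun t : ℝ => φ (t : AddCircle (1 : ℝ))) ∧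
      ∀ x : AddCircle (1 : ℝ),
        φ (x + (α : AddCircle (1 : ℝ))) = Complex.exp (2 * π * Complex.I * β) * φ x + ρ x := by
  haveI : Fact ((0:ℝ) < 1) := ⟨one_pos⟩
  set g : ℝ → ℂ := fun t => ρ (t : AddCircle (1:ℝ)) with hg
  -- periodicity of g and its iterated derivatives
  have hgper : Function.Periodic g 1 := by
    intro t
    simp only [hg]
    congr 1
    exact AddCircle.coe_add_period 1 t
  have hiterper : ∀ k : ℕ, Function.Periodic (deriv^[k] g) 1 := by
    intro k
    induction k with
    | zero => exact hgper
    | succ k ih =>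
      rw [Function.iterate_succ_apply']
      exact aux_periodic_deriv _ ih
  have hitersmooth : ∀ k : ℕ, ContDiff ℝ (⊤ : ℕ∞) (deriv^[k] g) := fun k => hρ.iterate_deriv k
  -- the key integration-by-parts identity
  have key : ∀ (n : ℤ), n ≠ 0 → ∀ (k : ℕ),
      fourierCoeff ρ n
        = (1 / (2 * π * Complex.I * n)) ^ k * fourierCoeffOn zero_lt_one (deriv^[k] g) n := by
    intro n hn k
    induction k with
    | zero => simpa using aux_fourierCoeff_eq_fourierCoeffOn ρ n
    | succ k ih =>
      have hper1 : deriv^[k] g 1 = deriv^[k] g 0 := by simpa using (hiterper k) 0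
      rw [ih, aux_fourierCoeffOn_step (deriv^[k] g) (hitersmooth k) hper1 hn,
        Function.iterate_succ_apply', pow_succ]
      ring
  -- decay of Fourier coefficients
  have decay : ∀ k : ℕ, ∃ B : ℝ, 0 ≤ B ∧ ∀ n : ℤ, n ≠ 0 →
      ‖fourierCoeff ρ n‖ ≤ B / |(n:ℝ)| ^ k := by
    intro k
    obtain ⟨M, hM⟩ := (isCompact_Icc (a := (0:ℝ)) (b := 1)).exists_bound_of_continuousOn
      ((hitersmooth k).continuous.continuousOn (s := Set.Icc 0 1))
    have hM0 : 0 ≤ M := le_trans (norm_nonneg _) (hM 0 (by norm_num))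
    refine ⟨M, hM0, fun n hn => ?_⟩
    have hbound := aux_norm_fourierCoeffOn_le (deriv^[k] g) M hM n
    have hnpos : (1:ℝ) ≤ |(n:ℝ)| := by
      rw [← Int.cast_abs]
      exact_mod_cast Int.one_le_abs hn
    have h1 : ‖(1 / (2 * (π:ℂ) * Complex.I * n))‖ ≤ 1 / |(n:ℝ)| := by
      rw [norm_div, norm_one]
      have habs : ‖(2 * (π:ℂ) * Complex.I * n : ℂ)‖ = 2 * π * |(n:ℝ)| := by
        rw [norm_mul, norm_mul, norm_mul]
        simp [Complex.norm_real, abs_of_pos Real.pi_pos, Int.cast_abs]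
      rw [habs]
      apply div_le_div_of_nonneg_left one_pos.le (by positivity)
      nlinarith [Real.pi_gt_three, abs_nonneg ((n:ℝ))]
    calc ‖fourierCoeff ρ n‖
        = ‖(1 / (2 * (π:ℂ) * Complex.I * n)) ^ k‖ * ‖fourierCoeffOn zero_lt_one (deriv^[k] g) n‖ := by
          rw [key n hn k, norm_mul, norm_pow]
      _ ≤ (1 / |(n:ℝ)|) ^ k * M := by
          apply mul_le_mul _ hbound (norm_nonneg _) (by positivity)
          rw [norm_pow]
          exact pow_le_pow_left₀ (norm_nonneg _) h1 k
      _ = M / |(n:ℝ)| ^ k := by rw [div_pow, one_pow]; ring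
  -- the small divisors
  set lam : ℂ := Complex.exp (2 * π * Complex.I * β) with hlam
  have hlamnorm : ‖lam‖ = 1 := by
    rw [hlam]
    apply aux_norm_exp_of_re_zero
    simp
  set d : ℤ → ℂ := fun n => Complex.exp (2 * π * Complex.I * ((n : ℝ) * α - β)) - 1 with hd
  have hmaxpos : ∀ n : ℤ, (0:ℝ) < ((max |n| 1 : ℤ) : ℝ) := by
    intro n
    have : (1:ℤ) ≤ max |n| 1 := le_max_right _ _
    exact_mod_cast lt_of_lt_of_le zero_lt_one (by exact_mod_cast this)
  have hdlb : ∀ n : ℤ, C / ((max |n| 1 : ℤ) : ℝ) ^ ((1:ℝ) + τ) ≤ ‖d n‖ := by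
    intro n
    simpa [hd] using hdio n
  have hdpos : ∀ n : ℤ, 0 < ‖d n‖ := by
    intro n
    refine lt_of_lt_of_le ?_ (hdlb n)
    exact div_pos hC (Real.rpow_pos_of_pos (hmaxpos n) _)
  have hdne : ∀ n : ℤ, d n ≠ 0 := fun n => norm_pos_iff.mp (hdpos n)
  have hlamne : lam ≠ 0 := Complex.exp_ne_zero _
  -- coefficients of φ
  set c : ℤ → ℂ := fun n => fourierCoeff ρ n / (lam * d n) with hc
  have hrel : ∀ n : ℤ, c n * (lam * d n) = fourierCoeff ρ n := by
    intro n
    rw [hc]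
    exact div_mul_cancel₀ _ (mul_ne_zero hlamne (hdne n))
  have hdub : ∀ n : ℤ, ‖d n‖ ≤ 2 := by
    intro n
    rw [hd]
    calc ‖Complex.exp (2 * π * Complex.I * ((n : ℝ) * α - β)) - 1‖
        ≤ ‖Complex.exp (2 * π * Complex.I * ((n : ℝ) * α - β))‖ + ‖(1:ℂ)‖ := norm_sub_le _ _
      _ = 2 := by
          rw [aux_norm_exp_of_re_zero _ (by simp)]
          norm_num
  -- degree for the Diophantine exponent
  set N : ℕ := ⌈τ⌉₊ + 1 with hN
  have hτN : (1:ℝ) + τ ≤ (N:ℝ) := by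
    rw [hN]
    push_cast
    have := Nat.le_ceil τ
    linarith
  -- bound on c
  have hcle : ∀ n : ℤ, n ≠ 0 → ‖c n‖ ≤ ‖fourierCoeff ρ n‖ * |(n:ℝ)| ^ N / C := by
    intro n hn
    have hnabs : ((max |n| 1 : ℤ) : ℝ) = |(n:ℝ)| := by
      rw [max_eq_left (Int.one_le_abs hn)]
      push_cast
      rfl
    have h1 : (1:ℝ) ≤ |(n:ℝ)| := by
      rw [← hnabs]; exact_mod_cast le_max_right |n| 1
    have hrpow : ((max |n| 1 : ℤ) : ℝ) ^ ((1:ℝ) + τ) ≤ |(n:ℝ)| ^ N := by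
      rw [hnabs]
      calc |(n:ℝ)| ^ ((1:ℝ) + τ) ≤ |(n:ℝ)| ^ ((N:ℕ):ℝ) :=
            Real.rpow_le_rpow_of_exponent_le h1 hτN
        _ = |(n:ℝ)| ^ N := Real.rpow_natCast _ _
    have hnormc : ‖c n‖ = ‖fourierCoeff ρ n‖ / ‖d n‖ := by
      rw [hc, norm_div, norm_mul, hlamnorm, one_mul]
    rw [hnormc]
    rw [div_le_div_iff₀ (hdpos n) hC]
    have h2 : C / ((max |n| 1 : ℤ) : ℝ) ^ ((1:ℝ) + τ) ≤ ‖d n‖ := hdlb n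
    have h3 : C ≤ ‖d n‖ * ((max |n| 1 : ℤ) : ℝ) ^ ((1:ℝ) + τ) := by
      rw [div_le_iff₀ (Real.rpow_pos_of_pos (hmaxpos n) _)] at h2
      linarith
    calc ‖fourierCoeff ρ n‖ * C
        ≤ ‖fourierCoeff ρ n‖ * (‖d n‖ * ((max |n| 1 : ℤ) : ℝ) ^ ((1:ℝ) + τ)) :=
          mul_le_mul_of_nonneg_left h3 (norm_nonneg _)
      _ ≤ ‖fourierCoeff ρ n‖ * (‖d n‖ * |(n:ℝ)| ^ N) :=
          mul_le_mul_of_nonneg_left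
            (mul_le_mul_of_nonneg_left hrpow (norm_nonneg _)) (norm_nonneg _)
      _ = ‖fourierCoeff ρ n‖ * |(n:ℝ)| ^ N * ‖d n‖ := by ring
  -- summable weighted bounds
  have hsummable : ∀ k : ℕ, Summable (fun n : ℤ => ‖c n‖ * (2 * π * |(n:ℝ)|) ^ k) := by
    intro k
    obtain ⟨B, hB0, hB⟩ := decay (k + N + 2)
    have hsum2 : Summable (fun n : ℤ => ((2*π) ^ k * B / C) * |1 / (n:ℝ) ^ 2|) := by
      apply Summable.mul_left
      apply Summable.abs
      exact (Real.summable_one_div_int_pow (p := 2)).mpr one_lt_two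
    apply Summable.of_norm_bounded_eventually hsum2
    rw [Filter.eventually_cofinite]
    apply Set.Finite.subset (Set.finite_singleton (0:ℤ))
    intro n hn
    simp only [Set.mem_setOf_eq, not_le] at hn
    by_contra hn0
    have hn' : n ≠ 0 := by simpa using hn0
    refine absurd hn (not_lt.mpr ?_)
    have h1 : (1:ℝ) ≤ |(n:ℝ)| := by
      rw [← Int.cast_abs]; exact_mod_cast Int.one_le_abs hn'
    have hnpos : (0:ℝ) < |(n:ℝ)| := lt_of_lt_of_le zero_lt_one h1
    have hcb := hcle n hn'
    have hdecay := hB n hn'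
    have hnorm : ‖‖c n‖ * (2 * π * |(n:ℝ)|) ^ k‖ = ‖c n‖ * (2*π) ^ k * |(n:ℝ)| ^ k := by
      rw [Real.norm_eq_abs, abs_of_nonneg (by positivity), mul_pow]
      ring
    rw [hnorm]
    have habs2 : |1 / (n:ℝ) ^ 2| = 1 / |(n:ℝ)| ^ 2 := by
      rw [abs_div, abs_one, abs_pow, sq_abs, ← sq_abs]
    rw [habs2]
    have hchain : ‖c n‖ * |(n:ℝ)| ^ k ≤ B / (C * |(n:ℝ)| ^ 2) := by
      calc ‖c n‖ * |(n:ℝ)| ^ k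
          ≤ (‖fourierCoeff ρ n‖ * |(n:ℝ)| ^ N / C) * |(n:ℝ)| ^ k :=
            mul_le_mul_of_nonneg_right hcb (by positivity)
        _ = ‖fourierCoeff ρ n‖ * (|(n:ℝ)| ^ (N + k) / C) := by rw [pow_add]; ring
        _ ≤ (B / |(n:ℝ)| ^ (k + N + 2)) * (|(n:ℝ)| ^ (N + k) / C) := by
            apply mul_le_mul_of_nonneg_right hdecay (by positivity)
        _ = B / (C * |(n:ℝ)| ^ 2) := by
            rw [show k + N + 2 = (N + k) + 2 by ring, pow_add]
            field_simp
    calc ‖c n‖ * (2*π) ^ k * |(n:ℝ)| ^ k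
        = (2*π) ^ k * (‖c n‖ * |(n:ℝ)| ^ k) := by ring
      _ ≤ (2*π) ^ k * (B / (C * |(n:ℝ)| ^ 2)) :=
          mul_le_mul_of_nonneg_left hchain (by positivity)
      _ = (2*π) ^ k * B / C * (1 / |(n:ℝ)| ^ 2) := by field_simp
  have hsum0 : Summable (fun n : ℤ => ‖c n‖) := by
    have := hsummable 0
    simpa using this
  -- the solution as a continuous map
  have hsumC : Summable (fun n : ℤ => c n • (fourier n : C(AddCircle (1:ℝ), ℂ))) := by
    apply Summable.of_norm
    simpa [norm_smul, fourier_norm] using hsum0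
  set Φ : C(AddCircle (1:ℝ), ℂ) := ∑' n : ℤ, c n • (fourier n : C(AddCircle (1:ℝ), ℂ)) with hΦdef
  have hΦsum : HasSum (fun n : ℤ => c n • (fourier n : C(AddCircle (1:ℝ), ℂ))) Φ :=
    hsumC.hasSum
  have hpt : ∀ x : AddCircle (1:ℝ), HasSum (fun n : ℤ => c n * (fourier n x : ℂ)) (Φ x) := by
    intro x
    have := (ContinuousMap.evalCLM ℂ x).hasSum hΦsum
    simpa using this
  -- smoothness of the lift
  have hcoe : (fun t : ℝ => Φ (t : AddCircle (1:ℝ)))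
      = fun t : ℝ => ∑' n : ℤ, c n * Complex.exp (((2 * π * (n:ℤ) : ℝ) : ℂ) * Complex.I * t) := by
    funext t
    rw [(hpt (t : AddCircle (1:ℝ))).tsum_eq.symm]
    apply tsum_congr
    intro n
    congr 1
    rw [fourier_coe_apply]
    congr 1
    push_cast
    ring
  have hsmooth : ContDiff ℝ (⊤ : ℕ∞) (fun t : ℝ => Φ (t : AddCircle (1:ℝ))) := by
    rw [hcoe]
    apply contDiff_tsum (v := fun (k : ℕ) (n : ℤ) => ‖c n‖ * (2 * π * |(n:ℝ)|) ^ k)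
    · intro n
      exact aux_contDiff_cexp _ _
    · intro k _
      exact hsummable k
    · intro k n x _
      rw [aux_norm_iteratedFDeriv_cexp]
      rw [show |2 * π * ((n:ℤ):ℝ)| = 2 * π * |((n:ℤ):ℝ)| by
        rw [abs_mul, abs_of_pos (by positivity : (0:ℝ) < 2 * π)]]
  -- summability of the Fourier coefficients of ρ
  have hρhatsum : Summable (fourierCoeff ρ) := by
    apply Summable.of_norm_bounded (hsum0.mul_left 2)
    intro n
    rw [← hrel n, norm_mul, norm_mul, hlamnorm, one_mul]
    calc ‖c n‖ * ‖d n‖ ≤ ‖c n‖ * 2 := mul_le_mul_of_nonneg_left (hdub n) (norm_nonneg _)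
      _ = 2 * ‖c n‖ := by ring
  have hρcont : Continuous ρ := by
    exact (QuotientAddGroup.isQuotientMap_mk _).continuous_iff.mpr hρ.continuous
  set ρc : C(AddCircle (1:ℝ), ℂ) := ⟨ρ, hρcont⟩ with hρc
  have hρpt : ∀ x : AddCircle (1:ℝ),
      HasSum (fun n : ℤ => fourierCoeff ρ n • (fourier n x : ℂ)) (ρ x) := by
    intro x
    have : Summable (fourierCoeff (ρc : AddCircle (1:ℝ) → ℂ)) := hρhatsum
    exact has_pointwise_sum_fourier_series_of_summable this x
  -- key multiplicativity of fourier
  have hfouriermul : ∀ (n : ℤ) (y z : AddCircle (1:ℝ)),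
      (fourier n (y + z) : ℂ) = fourier n y * fourier n z := by
    intro n y z
    simp only [fourier_apply, smul_add, AddCircle.toCircle_add, Circle.coe_mul]
  have hfourierα : ∀ n : ℤ, (fourier n ((α:ℝ) : AddCircle (1:ℝ)) : ℂ) - lam = lam * d n := by
    intro n
    simp only [hlam, hd]
    rw [fourier_coe_apply, mul_sub, mul_one, ← Complex.exp_add]
    congr 1
    push_cast
    ring
  refine ⟨Φ, Φ.continuous, hsmooth, ?_⟩
  intro x
  have h1 : HasSum (fun n : ℤ => c n * (fourier n (x + ((α:ℝ) : AddCircle (1:ℝ))) : ℂ))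
      (Φ (x + ((α:ℝ) : AddCircle (1:ℝ)))) := hpt _
  have h2 : HasSum (fun n : ℤ => lam * (c n * (fourier n x : ℂ))) (lam * Φ x) :=
    (hpt x).mul_left lam
  have h3 := h1.sub h2
  have h4 : (fun n : ℤ => c n * (fourier n (x + ((α:ℝ) : AddCircle (1:ℝ))) : ℂ)
      - lam * (c n * (fourier n x : ℂ)))
      = fun n : ℤ => fourierCoeff ρ n • (fourier n x : ℂ) := by
    funext n
    rw [hfouriermul n x ((α:ℝ) : AddCircle (1:ℝ)), smul_eq_mul, ← hrel n, ← hfourierα n]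
    ring
  rw [h4] at h3
  have := h3.unique (hρpt x)
  -- this : Φ (x + α) - lam * Φ x = ρ x
  have hgoal : Φ (x + ((α:ℝ) : AddCircle (1:ℝ))) = lam * Φ x + ρ x := by
    linear_combination this
  simpa [hlam] using hgoal
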